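/- Let τ ≥ 2 and γ ∈ (0,1), and let K_{γ,τ} = { irrational x ∈ ℝ : q_{k+1}(x) ≤ γ^{−1} q_k(x)^{τ−1} for all k ≥ 0 }. Then sup_{x ∈ K_{γ,τ}} Σ_{k≥n} (log a_{k+1}(x))/q_k(x) → 0 as n → ∞. In particular there exists a decreasing sequence (M_n) of positive reals with M_n → 0, depending only on γ and τ, such that K_{γ,τ} ⊆ { irrational x : Σ_{k≥n} (log a_{k+1}(x))/q_k(x) ≤ M_n for all n }; and every x ∈ K_{γ,τ} satisfies B(x) < +∞. -/

import Mathlib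

open scoped ENNReal Topology

noncomputable def gaussIter (x : ℝ) : ℕ → ℝ
  | 0 => Int.fract x
  | n + 1 => Int.fract (gaussIter x n)⁻¹

noncomputable def pquot (x : ℝ) : ℕ → ℤ
  | 0 => ⌊x⌋
  | n + 1 => ⌊(gaussIter x n)⁻¹⌋

noncomputable def qden (x : ℝ) : ℕ → ℤ
  | 0 => 1
  | 1 => pquot x 1
  | n + 2 => pquot x (n + 2) * qden x (n + 1) + qden x n

noncomputable def pnum (x : ℝ) : ℕ → ℤ
  | 0 => pquot x 0
  | 1 => pquot x 1 * pquot x 0 + 1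
  | n + 2 => pquot x (n + 2) * pnum x (n + 1) + pnum x n

noncomputable def brjunoTerm (x : ℝ) (k : ℕ) : ℝ :=
  Real.log (pquot x (k + 1)) / (qden x k : ℝ)

open Classical in
noncomputable def brjuno (x : ℝ) : ℝ≥0∞ :=
  if Irrational x then ∑' k, ENNReal.ofReal (brjunoTerm x k) else ⊤

noncomputable def brjunoTailE (x : ℝ) (n : ℕ) : ℝ≥0∞ :=
  ∑' k, ENNReal.ofReal (brjunoTerm x (n + k))

noncomputable def cfLen (x : ℝ) : ℕ := sInf {n | gaussIter x n = 0}

noncomputable def brjunoFinite (x : ℝ) : ℝ :=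
  ∑ k ∈ Finset.range (cfLen x), Real.log (pquot x (k + 1)) / (qden x k : ℝ)

def brjunoSuper (t : ℝ) : Set ℝ := {x | ENNReal.ofReal t < brjuno x}

def IsCompOf (A : Set ℝ) (a b : ℝ) : Prop := ∃ x ∈ A, connectedComponentIn A x = Set.Ioo a b

def diamond (κ a b : ℝ) : Set ℂ :=
  {z : ℂ | a < z.re ∧ z.re < b ∧ |z.im| ≤ κ * min (z.re - a) (b - z.re)}

noncomputable def CMset (κ M : ℝ) : Set ℂ :=
  (fun ξ : ℂ => Complex.exp (2 * Real.pi * Complex.I * ξ)) ''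
    (⋃ (a : ℝ) (b : ℝ) (_ : IsCompOf (brjunoSuper M) a b), diamond κ a b)ᶜ ∪ {0}

def KstarR (Ms : ℕ → ℝ) : Set ℝ :=
  {x | Irrational x ∧ ∀ n, brjunoTailE x n ≤ ENNReal.ofReal (Ms n)}

noncomputable def CstarSet (κ : ℝ) (Ms : ℕ → ℝ) : Set ℂ :=
  (fun ξ : ℂ => Complex.exp (2 * Real.pi * Complex.I * ξ)) ''
    (⋃ (a : ℝ) (b : ℝ) (_ : IsCompOf (KstarR Ms)ᶜ a b), diamond κ a b)ᶜ ∪ {0}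

set_option maxRecDepth 8000
set_option maxHeartbeats 400000

lemma gauss_facts {x : ℝ} (hx : Irrational x) (n : ℕ) :
    Irrational (gaussIter x n) ∧ gaussIter x n ∈ Set.Ioo (0:ℝ) 1 := by
  induction n with
  | zero =>
    have h1 : Irrational (Int.fract x) := by
      simpa [Int.self_sub_floor] using hx.sub_intCast ⌊x⌋
    refine ⟨h1, ⟨?_, Int.fract_lt_one x⟩⟩
    rcases (Int.fract_nonneg x).lt_or_eq with h | h
    · exact h
    · exact absurd h.symm (by exact_mod_cast h1.ne_int 0)
  | succ n ih =>
    obtain ⟨hirr, h0, h1⟩ := ih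
    have hinv : Irrational (gaussIter x n)⁻¹ := hirr.inv
    have h2 : Irrational (Int.fract (gaussIter x n)⁻¹) := by
      simpa [Int.self_sub_floor] using hinv.sub_intCast ⌊(gaussIter x n)⁻¹⌋
    refine ⟨h2, ⟨?_, Int.fract_lt_one _⟩⟩
    rcases (Int.fract_nonneg (gaussIter x n)⁻¹).lt_or_eq with h | h
    · exact h
    · exact absurd h.symm (by exact_mod_cast h2.ne_int 0)

lemma pquot_one_le {x : ℝ} (hx : Irrational x) (n : ℕ) : 1 ≤ pquot x (n + 1) := by
  obtain ⟨_, h0, h1⟩ := gauss_facts hx n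
  have : (1:ℝ) ≤ (gaussIter x n)⁻¹ := by
    rw [le_inv_comm₀] <;> simp [h0, h1.le]
  exact Int.le_floor.mpr (by exact_mod_cast this)

lemma qden_one_le {x : ℝ} (hx : Irrational x) : ∀ n, 1 ≤ qden x n := by
  intro n
  induction n using Nat.strong_induction_on with
  | _ n ih =>
    match n with
    | 0 => simp [qden]
    | 1 => simpa [qden] using pquot_one_le hx 0
    | (n+2) =>
      have h1 := ih (n+1) (by omega)
      have h0 := ih n (by omega)
      have ha := pquot_one_le hx (n+1)
      show 1 ≤ pquot x (n + 2) * qden x (n + 1) + qden x n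
      nlinarith

lemma qden_mono {x : ℝ} (hx : Irrational x) (n : ℕ) : qden x n ≤ qden x (n+1) := by
  match n with
  | 0 => simpa [qden] using pquot_one_le hx 0
  | (n+1) =>
    have h1 := qden_one_le hx (n+1)
    have h0 := qden_one_le hx n
    have ha := pquot_one_le hx (n+1)
    show qden x (n+1) ≤ pquot x (n + 2) * qden x (n + 1) + qden x n
    nlinarith

lemma qden_two_mul {x : ℝ} (hx : Irrational x) (n : ℕ) : 2 * qden x n ≤ qden x (n+2) := by
  have h1 := qden_one_le hx (n+1)
  have h0 := qden_one_le hx n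
  have hm := qden_mono hx n
  have ha := pquot_one_le hx (n+1)
  show 2 * qden x n ≤ pquot x (n + 2) * qden x (n + 1) + qden x n
  nlinarith

lemma pquot_le_qden {x : ℝ} (hx : Irrational x) (k : ℕ) : pquot x (k+1) ≤ qden x (k+1) := by
  match k with
  | 0 => simp [qden]
  | (k+1) =>
    have h1 := qden_one_le hx (k+1)
    have h0 := qden_one_le hx k
    have ha := pquot_one_le hx (k+1)
    show pquot x (k+2) ≤ pquot x (k + 2) * qden x (k + 1) + qden x k
    nlinarith

lemma qden_growth {x : ℝ} (hx : Irrational x) : ∀ n, Real.sqrt 2 ^ n ≤ 2 * (qden x n : ℝ) := by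
  intro n
  induction n using Nat.strong_induction_on with
  | _ n ih =>
    match n with
    | 0 => simp [qden]
    | 1 =>
      have h1 := qden_one_le hx 1
      have : Real.sqrt 2 ≤ 2 := by
        nlinarith [Real.sqrt_nonneg 2, Real.sq_sqrt (by norm_num : (0:ℝ) ≤ 2)]
      calc Real.sqrt 2 ^ 1 = Real.sqrt 2 := pow_one _
        _ ≤ 2 := this
        _ ≤ 2 * (qden x 1 : ℝ) := by
            have : (1:ℝ) ≤ (qden x 1 : ℝ) := by exact_mod_cast h1
            nlinarith
    | (n+2) =>
      have hi := ih n (by omega)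
      have h2 : (2 * qden x n : ℝ) ≤ (qden x (n+2) : ℝ) := by exact_mod_cast qden_two_mul hx n
      have hs : Real.sqrt 2 ^ (n+2) = 2 * Real.sqrt 2 ^ n := by
        rw [pow_add, pow_two, Real.mul_self_sqrt (by norm_num : (0:ℝ) ≤ 2)]; ring
      rw [hs]; nlinarith

lemma term_bound {x τ γ : ℝ} (hτ : 2 ≤ τ) (hγ : γ ∈ Set.Ioo (0 : ℝ) 1)
    (hx : Irrational x)
    (hK : ∀ k : ℕ, (qden x (k + 1) : ℝ) ≤ γ⁻¹ * (qden x k : ℝ) ^ (τ - 1)) (k : ℕ) :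
    brjunoTerm x k ≤
      (2 * Real.log γ⁻¹ + 4 * (τ - 1)) * ((Real.sqrt (Real.sqrt 2))⁻¹) ^ k := by
  set s : ℝ := Real.sqrt (Real.sqrt 2) with hs_def
  have h2 : Real.sqrt 2 * Real.sqrt 2 = 2 := Real.mul_self_sqrt (by norm_num)
  have hss : s * s = Real.sqrt 2 := Real.mul_self_sqrt (Real.sqrt_nonneg 2)
  have h21 : (1:ℝ) < Real.sqrt 2 := by
    rw [show (1:ℝ) = Real.sqrt 1 from Real.sqrt_one.symm]
    exact Real.sqrt_lt_sqrt (by norm_num) (by norm_num)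
  have hs1 : 1 < s := by
    rw [hs_def, show (1:ℝ) = Real.sqrt 1 from Real.sqrt_one.symm]
    exact Real.sqrt_lt_sqrt (by norm_num) h21
  have hs0 : 0 < s := by linarith
  set P : ℝ := s ^ k with hP_def
  have hP1 : 1 ≤ P := one_le_pow₀ hs1.le
  have hP0 : 0 < P := by linarith
  set e : ℝ := (s⁻¹) ^ k with he_def
  have he0 : 0 < e := by positivity
  have heP : e * P = 1 := by
    rw [he_def, hP_def, ← mul_pow, inv_mul_cancel₀ (ne_of_gt hs0), one_pow]
  set q : ℝ := (qden x k : ℝ) with hq_def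
  have hq1 : (1:ℝ) ≤ q := by rw [hq_def]; exact_mod_cast qden_one_le hx k
  have hq0 : (0:ℝ) < q := by linarith
  -- growth
  have hgrow : Real.sqrt 2 ^ k ≤ 2 * q := qden_growth hx k
  have hPq : P * P ≤ 2 * q := by
    have : P * P = Real.sqrt 2 ^ k := by
      rw [hP_def, ← pow_add, ← two_mul, pow_mul, sq, hss]
    rw [this]; exact hgrow
  set r : ℝ := Real.sqrt q with hr_def
  have hrr : r * r = q := Real.mul_self_sqrt hq0.le
  have hr0 : (0:ℝ) < r := Real.sqrt_pos.mpr hq0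
  have hPr : P ≤ 2 * r := by nlinarith
  set C : ℝ := Real.log γ⁻¹ with hC_def
  have hC0 : 0 < C := Real.log_pos (by rw [one_lt_inv_iff₀]; exact ⟨hγ.1, hγ.2⟩)
  have hτ1 : (1:ℝ) ≤ τ - 1 := by linarith
  -- numerator bound
  set a : ℝ := ((pquot x (k+1) : ℤ) : ℝ) with ha_def
  have ha1 : (1:ℝ) ≤ a := by rw [ha_def]; exact_mod_cast pquot_one_le hx k
  have haQ : a ≤ (qden x (k+1) : ℝ) := by rw [ha_def]; exact_mod_cast pquot_le_qden hx k
  have hQ : (qden x (k+1) : ℝ) ≤ γ⁻¹ * q ^ (τ - 1) := hK k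
  have hloga : Real.log a ≤ C + (τ - 1) * Real.log q := by
    have h1 : Real.log a ≤ Real.log (γ⁻¹ * q ^ (τ - 1)) :=
      Real.log_le_log (by linarith) (le_trans haQ hQ)
    have h2' : Real.log (γ⁻¹ * q ^ (τ - 1)) = C + (τ - 1) * Real.log q := by
      rw [Real.log_mul (ne_of_gt (inv_pos.mpr hγ.1)) (ne_of_gt (Real.rpow_pos_of_pos hq0 _)), Real.log_rpow hq0]
    linarith [h1, h2'.le, h2'.ge]
  have hlogq : Real.log q ≤ 2 * r := by
    have h1 := Real.log_le_sub_one_of_pos hr0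
    have h2' : Real.log r = Real.log q / 2 := Real.log_sqrt hq0.le
    linarith
  have hnum : Real.log a ≤ C + (τ - 1) * (2 * r) := by
    have h := mul_le_mul_of_nonneg_left hlogq (by linarith : (0:ℝ) ≤ τ - 1)
    linarith
  -- pieces: 1 ≤ 2 e q and r ≤ 2 e q
  have h1' : 1 ≤ 2 * e * q := by
    have h := mul_le_mul_of_nonneg_left hPq he0.le
    calc (1:ℝ) ≤ P := hP1
      _ = (e * P) * P := by rw [heP]; ring
      _ = e * (P * P) := by ring
      _ ≤ e * (2 * q) := h
      _ = 2 * e * q := by ring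
  have h2q : r ≤ 2 * e * q := by
    have hh : e * P ≤ e * (2 * r) := mul_le_mul_of_nonneg_left hPr he0.le
    have hh2 : 1 ≤ 2 * e * r := by
      calc (1:ℝ) = e * P := heP.symm
        _ ≤ e * (2 * r) := hh
        _ = 2 * e * r := by ring
    calc r = r * 1 := (mul_one r).symm
      _ ≤ r * (2 * e * r) := by
          exact mul_le_mul_of_nonneg_left hh2 hr0.le
      _ = 2 * e * (r * r) := by ring
      _ = 2 * e * q := by rw [hrr]
  have hdiv : brjunoTerm x k ≤ (C + (τ - 1) * (2 * r)) / q := by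
    have : brjunoTerm x k = Real.log a / q := rfl
    rw [this]
    gcongr
  refine hdiv.trans ?_
  rw [div_le_iff₀ hq0]
  have H1 := mul_le_mul_of_nonneg_left h2q (by linarith : (0:ℝ) ≤ 2 * (τ - 1))
  have H2 := mul_le_mul_of_nonneg_left h1' hC0.le
  ring_nf at H1 H2 ⊢
  linarith


/-- the tails of the Brjuno series tend to `0` uniformly on `K_{γ,τ}`;
in particular `K_{γ,τ}` is contained in a set `K*` defined by a vanishing decreasing
sequence, and every point of `K_{γ,τ}` is a Brjuno number. -/
theorem statement18 (τ γ : ℝ) (hτ : 2 ≤ τ) (hγ : γ ∈ Set.Ioo (0 : ℝ) 1) :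
    (Filter.Tendsto
      (fun n => ⨆ x ∈ {x : ℝ | Irrational x ∧
        ∀ k : ℕ, (qden x (k + 1) : ℝ) ≤ γ⁻¹ * (qden x k : ℝ) ^ (τ - 1)},
          brjunoTailE x n)
      Filter.atTop (nhds 0)) ∧
    (∃ Ms : ℕ → ℝ, (∀ n, 0 < Ms n) ∧ Antitone Ms ∧
      Filter.Tendsto Ms Filter.atTop (nhds 0) ∧
      {x : ℝ | Irrational x ∧
        ∀ k : ℕ, (qden x (k + 1) : ℝ) ≤ γ⁻¹ * (qden x k : ℝ) ^ (τ - 1)} ⊆ KstarR Ms) ∧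
    (∀ x ∈ {x : ℝ | Irrational x ∧
        ∀ k : ℕ, (qden x (k + 1) : ℝ) ≤ γ⁻¹ * (qden x k : ℝ) ^ (τ - 1)},
      brjuno x ≠ ⊤) := by
  have h21 : (1:ℝ) < Real.sqrt 2 := by
    rw [show (1:ℝ) = Real.sqrt 1 from Real.sqrt_one.symm]
    exact Real.sqrt_lt_sqrt (by norm_num) (by norm_num)
  set s : ℝ := Real.sqrt (Real.sqrt 2) with hs_def
  have hs1 : 1 < s := by
    rw [hs_def, show (1:ℝ) = Real.sqrt 1 from Real.sqrt_one.symm]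
    exact Real.sqrt_lt_sqrt (by norm_num) h21
  set ρ : ℝ := s⁻¹ with hρ_def
  have hρ0 : 0 < ρ := by rw [hρ_def]; positivity
  have hρ1 : ρ < 1 := by rw [hρ_def]; exact inv_lt_one_of_one_lt₀ hs1
  set C : ℝ := Real.log γ⁻¹ with hC_def
  have hC0 : 0 < C := Real.log_pos (by rw [one_lt_inv_iff₀]; exact ⟨hγ.1, hγ.2⟩)
  set A : ℝ := 2 * C + 4 * (τ - 1) with hA_def
  have hA0 : 0 < A := by rw [hA_def]; nlinarith
  set c : ℝ := A * (1 - ρ)⁻¹ with hc_def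
  have hc0 : 0 < c := by
    have h1 : 0 < 1 - ρ := by linarith
    rw [hc_def]
    exact mul_pos hA0 (inv_pos.mpr h1)
  set Ms : ℕ → ℝ := fun n => c * ρ ^ n with hMs_def
  -- the key tail bound
  have tail : ∀ x : ℝ, (Irrational x ∧
      ∀ k : ℕ, (qden x (k + 1) : ℝ) ≤ γ⁻¹ * (qden x k : ℝ) ^ (τ - 1)) →
      ∀ n : ℕ, brjunoTailE x n ≤ ENNReal.ofReal (Ms n) := by
    intro x hx n
    have hsum : Summable (fun k : ℕ => (A * ρ ^ n) * ρ ^ k) :=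
      (summable_geometric_of_lt_one hρ0.le hρ1).mul_left _
    have hgeo : ∑' k : ℕ, (A * ρ ^ n) * ρ ^ k = (A * ρ ^ n) * (1 - ρ)⁻¹ := by
      rw [tsum_mul_left, tsum_geometric_of_lt_one hρ0.le hρ1]
    calc brjunoTailE x n ≤ ∑' k : ℕ, ENNReal.ofReal ((A * ρ ^ n) * ρ ^ k) := by
          apply ENNReal.tsum_le_tsum
          intro k
          apply ENNReal.ofReal_le_ofReal
          calc brjunoTerm x (n + k) ≤ A * ρ ^ (n + k) := term_bound hτ hγ hx.1 hx.2 (n + k)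
            _ = (A * ρ ^ n) * ρ ^ k := by rw [pow_add]; ring
      _ = ENNReal.ofReal (∑' k : ℕ, (A * ρ ^ n) * ρ ^ k) :=
          (ENNReal.ofReal_tsum_of_nonneg (fun k => by positivity) hsum).symm
      _ = ENNReal.ofReal (Ms n) := by rw [hgeo, hMs_def]; congr 1; rw [hc_def]; ring
  have hMs0 : Filter.Tendsto Ms Filter.atTop (nhds 0) := by
    have := (tendsto_pow_atTop_nhds_zero_of_lt_one hρ0.le hρ1).const_mul c
    simpa [hMs_def] using this
  refine ⟨?_, ⟨Ms, ?_, ?_, hMs0, ?_⟩, ?_⟩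
  · have hb : ∀ n, (⨆ x ∈ {x : ℝ | Irrational x ∧
        ∀ k : ℕ, (qden x (k + 1) : ℝ) ≤ γ⁻¹ * (qden x k : ℝ) ^ (τ - 1)},
          brjunoTailE x n) ≤ ENNReal.ofReal (Ms n) :=
      fun n => iSup₂_le fun x hx => tail x hx n
    have h0 : Filter.Tendsto (fun n => ENNReal.ofReal (Ms n)) Filter.atTop (nhds 0) := by
      rw [show (0:ℝ≥0∞) = ENNReal.ofReal 0 by simp]
      exact (ENNReal.continuous_ofReal.tendsto 0).comp hMs0
    exact tendsto_of_tendsto_of_tendsto_of_le_of_le tendsto_const_nhds h0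
      (fun n => zero_le) hb
  · intro n; rw [hMs_def]; positivity
  · intro m n hmn
    simp only [hMs_def]
    exact mul_le_mul_of_nonneg_left (pow_le_pow_of_le_one hρ0.le hρ1.le hmn) hc0.le
  · intro x hx
    exact ⟨hx.1, fun n => tail x hx n⟩
  · intro x hx
    have hb : brjuno x = brjunoTailE x 0 := by
      simp [brjuno, hx.1, brjunoTailE]
    rw [hb]
    exact ((tail x hx 0).trans_lt ENNReal.ofReal_lt_top).ne
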